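/- arXiv:1903.04954 — 3 statements merged into one kernel-verified Lean document; each statement's English description precedes it below -/
import Mathlib

section
/- Under the steady-state solution, the application probability a_i := ∑_{j ∈ Γ_i} q_j · (1 - (1-v)^{k_j}) / k_j equals χ h̄_{Γ_i} k_i, and hence satisfies the balance condition h_i · a_i = λ · p_i. -/
theorem stmt_4 {N : ℕ} (G : SimpleGraph (Fin N)) [DecidableRel G.Adj]
    (lam v χ : ℝ) (hlam : lam ∈ Set.Ioo (0:ℝ) 1) (hv : v ∈ Set.Ioo (0:ℝ) 1)
    (h : Fin N → ℝ) (hh : ∀ i, h i ∈ Set.Ioc (0:ℝ) 1)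
    (hdeg : ∀ i, 1 ≤ G.degree i)
    (hbar : Fin N → ℝ)
    (hhbar : ∀ i, hbar i = (1 / (G.degree i : ℝ)) * ∑ j ∈ G.neighborFinset i, h j)
    (p q a : Fin N → ℝ)
    (hp : ∀ i, p i = χ * h i * hbar i * (G.degree i : ℝ) / lam)
    (hq : ∀ i, q i = χ * h i * (G.degree i : ℝ) / (1 - (1 - v) ^ (G.degree i)))
    (ha : ∀ i, a i = ∑ j ∈ G.neighborFinset i,
      q j * (1 - (1 - v) ^ (G.degree j)) / (G.degree j : ℝ)) :
    (∀ i, a i = χ * hbar i * (G.degree i : ℝ)) ∧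
    (∀ i, h i * a i = lam * p i) := by
  have hdne : ∀ j : Fin N, (G.degree j : ℝ) ≠ 0 := by
    intro j
    have := hdeg j
    positivity
  have hvne : ∀ j : Fin N, (1 - (1 - v) ^ (G.degree j)) ≠ 0 := by
    intro j
    have h1 : (1 - v) ^ (G.degree j) < 1 := by
      apply pow_lt_one₀ (by linarith [hv.2]) (by linarith [hv.1])
        (Nat.one_le_iff_ne_zero.mp (hdeg j))
    linarith
  have key : ∀ i, a i = χ * hbar i * (G.degree i : ℝ) := by
    intro i
    rw [ha i, hhbar i]
    rw [Finset.sum_congr rfl (fun j _ => show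
      q j * (1 - (1 - v) ^ (G.degree j)) / (G.degree j : ℝ) = χ * h j by
      rw [hq j]; field_simp [hvne j, hdne j])]
    rw [← Finset.mul_sum]
    field_simp [hdne i]
  refine ⟨key, fun i => ?_⟩
  rw [key i, hp i]
  have : lam ≠ 0 := ne_of_gt hlam.1
  field_simp
end

section
/- Let φ, ψ, b, y, c̄ > 0 and k > 0, and for x ≥ 0 define F(x) = (φ_c b - sqrt(φ_c² b² + 2 φ_c ψ c̄ b y x k)) / (-2 φ_c c̄ x k) for x > 0, where φ_c, c̄ > 0 are fixed constants (with φ_c playing the role of φ and c̄ of the normalization φ). Then F extends continuously to x = 0 with F(0) = ψ y / (2 φ_c), F is strictly decreasing in x on [0,∞), and F(x) > 0 for all x ≥ 0. -/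
theorem stmt_10 (phic psi b y cbar k : ℝ)
    (hphic : 0 < phic) (hpsi : 0 < psi) (hb : 0 < b) (hy : 0 < y)
    (hcbar : 0 < cbar) (hk : 0 < k)
    (F : ℝ → ℝ)
    (hF0 : F 0 = psi * y / (2 * phic))
    (hFpos : ∀ x : ℝ, 0 < x →
      F x = (phic * b - Real.sqrt (phic ^ 2 * b ^ 2 + 2 * phic * psi * cbar * b * y * x * k))
              / (-2 * phic * cbar * x * k)) :
    ContinuousOn F (Set.Ici (0:ℝ)) ∧
    StrictAntiOn F (Set.Ici (0:ℝ)) ∧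
    (∀ x : ℝ, 0 ≤ x → 0 < F x) := by
  set A := phic * b with hA
  set B := 2 * phic * psi * cbar * b * y * k with hB
  set C := 2 * phic * cbar * k with hC
  have hApos : 0 < A := by positivity
  have hBpos : 0 < B := by positivity
  have hCpos : 0 < C := by positivity
  set G : ℝ → ℝ := fun x => B / (C * (A + Real.sqrt (A ^ 2 + B * x))) with hG
  have hrad : ∀ x : ℝ, 0 ≤ x → (0:ℝ) ≤ A ^ 2 + B * x := by
    intro x hx; positivity
  have hden : ∀ x : ℝ, 0 < A + Real.sqrt (A ^ 2 + B * x) := by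
    intro x
    have := Real.sqrt_nonneg (A ^ 2 + B * x)
    linarith
  have hFG : ∀ x ∈ Set.Ici (0:ℝ), F x = G x := by
    intro x hx
    rcases eq_or_lt_of_le (Set.mem_Ici.mp hx) with h | h
    · subst h
      simp only [hG, mul_zero, add_zero]
      rw [Real.sqrt_sq hApos.le, hF0]
      rw [hA, hB, hC]
      field_simp
      ring
    · rw [hFpos x h]
      have harg : phic ^ 2 * b ^ 2 + 2 * phic * psi * cbar * b * y * x * k
          = A ^ 2 + B * x := by rw [hA, hB]; ring
      rw [harg]
      set s := Real.sqrt (A ^ 2 + B * x) with hs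
      have hs2 : s ^ 2 = A ^ 2 + B * x := Real.sq_sqrt (hrad x h.le)
      have hd1 : (-2 * phic * cbar * x * k) ≠ 0 := by
        have : 0 < 2 * phic * cbar * x * k := by positivity
        linarith
      have hd2 : C * (A + s) ≠ 0 := by
        have := hden x
        positivity
      rw [div_eq_div_iff hd1 hd2]
      have : (A - s) * (A + s) = -(B * x) := by
        have : (A - s) * (A + s) = A ^ 2 - s ^ 2 := by ring
        rw [this, hs2]; ring
      have hC' : -2 * phic * cbar * x * k = -(C * x) := by rw [hC]; ring
      calc (A - s) * (C * (A + s)) = C * ((A - s) * (A + s)) := by ring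
        _ = C * (-(B * x)) := by rw [this]
        _ = B * (-(C * x)) := by ring
        _ = B * (-2 * phic * cbar * x * k) := by rw [hC']
  have hGcont : ContinuousOn G (Set.Ici (0:ℝ)) := by
    apply ContinuousOn.div continuousOn_const
    · exact (continuousOn_const.mul (continuousOn_const.add
        ((continuous_const.add (continuous_const.mul continuous_id)).continuousOn.sqrt)))
    · intro x hx
      have := hden x
      positivity
  have hGanti : StrictAntiOn G (Set.Ici (0:ℝ)) := by
    intro u hu v hv huv
    simp only [hG]
    have hsqrt : Real.sqrt (A ^ 2 + B * u) < Real.sqrt (A ^ 2 + B * v) := by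
      apply Real.sqrt_lt_sqrt (hrad u hu)
      have : B * u < B * v := by exact (mul_lt_mul_iff_right₀ hBpos).mpr huv
      linarith
    apply div_lt_div_of_pos_left hBpos
    · have := hden u; positivity
    · have := hden v
      have : C * (A + Real.sqrt (A ^ 2 + B * u)) < C * (A + Real.sqrt (A ^ 2 + B * v)) := by
        apply (mul_lt_mul_iff_right₀ hCpos).mpr; linarith
      linarith
  refine ⟨hGcont.congr hFG, ?_, ?_⟩
  · intro u hu v hv huv
    rw [hFG u hu, hFG v hv]
    exact hGanti hu hv huv
  · intro x hx
    rw [hFG x hx]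
    have := hden x
    positivity
end

section
/- The map T: [0,1]^N → [0,1]^N defined componentwise by T_i(h) = min(1, (φb - sqrt(φ²b² + 2φψ φ_norm b y h̄_i(h) k_i)) / (-2φ φ_norm h̄_i(h) k_i)) when h̄_i(h) > 0 and T_i(h) = min(1, ψy/(2φ)) when h̄_i(h) = 0, where h̄_i(h) = (1/k_i)∑_j A_{ij} h_j, is continuous, and therefore has a fixed point in [0,1]^N. -/
noncomputable def rhoF (φ ψ b y φn t : ℝ) : ℝ :=
  ψ * b * y / (Real.sqrt (φ ^ 2 * b ^ 2 + 2 * φ * ψ * φn * b * y * t) + φ * b)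

lemma rhoF_pos (φ ψ b y φn t : ℝ) (hφ : 0 < φ) (hψ : 0 < ψ) (hb : 0 < b) (hy : 0 < y) :
    0 < rhoF φ ψ b y φn t := by
  unfold rhoF
  have h1 : 0 ≤ Real.sqrt (φ ^ 2 * b ^ 2 + 2 * φ * ψ * φn * b * y * t) := Real.sqrt_nonneg _
  positivity

lemma rhoF_cont (φ ψ b y φn : ℝ) (hφ : 0 < φ) (hb : 0 < b) :
    Continuous (rhoF φ ψ b y φn) := by
  unfold rhoF
  apply Continuous.div continuous_const
  · exact (Real.continuous_sqrt.comp (by continuity)).add continuous_const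
  · intro x
    have h1 : 0 ≤ Real.sqrt (φ ^ 2 * b ^ 2 + 2 * φ * ψ * φn * b * y * x) := Real.sqrt_nonneg _
    positivity

lemma rhoF_anti (φ ψ b y φn : ℝ) (hφ : 0 < φ) (hψ : 0 < ψ) (hb : 0 < b) (hy : 0 < y)
    (hφn : 0 < φn) {s t : ℝ} (hs : 0 ≤ s) (hst : s ≤ t) :
    rhoF φ ψ b y φn t ≤ rhoF φ ψ b y φn s := by
  unfold rhoF
  have h1 : 0 ≤ Real.sqrt (φ ^ 2 * b ^ 2 + 2 * φ * ψ * φn * b * y * s) := Real.sqrt_nonneg _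
  have h2 : Real.sqrt (φ ^ 2 * b ^ 2 + 2 * φ * ψ * φn * b * y * s)
      ≤ Real.sqrt (φ ^ 2 * b ^ 2 + 2 * φ * ψ * φn * b * y * t) :=
    Real.sqrt_le_sqrt (by gcongr)
  gcongr

lemma rhoF_zero (φ ψ b y φn : ℝ) (hφ : 0 < φ) (hψ : 0 < ψ) (hb : 0 < b) (hy : 0 < y) :
    rhoF φ ψ b y φn 0 = ψ * y / (2 * φ) := by
  unfold rhoF
  have h1 : φ ^ 2 * b ^ 2 + 2 * φ * ψ * φn * b * y * 0 = (φ * b) ^ 2 := by ring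
  rw [h1, Real.sqrt_sq (by positivity)]
  field_simp
  ring

lemma gamma_rhoF (φ ψ b y φn w : ℝ) (hφ : 0 < φ) (hψ : 0 < ψ) (hb : 0 < b) (hy : 0 < y)
    (hφn : 0 < φn) (hw : 0 ≤ w) :
    (ψ * y * b / (2 * φ * φn)) / (rhoF φ ψ b y φn w) ^ 2 - (b / φn) / (rhoF φ ψ b y φn w) = w := by
  have hA : (0:ℝ) < φ ^ 2 * b ^ 2 + 2 * φ * ψ * φn * b * y * w := by positivity
  set u := Real.sqrt (φ ^ 2 * b ^ 2 + 2 * φ * ψ * φn * b * y * w) with hu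
  have hu2 : u ^ 2 = φ ^ 2 * b ^ 2 + 2 * φ * ψ * φn * b * y * w := Real.sq_sqrt hA.le
  have hupos : 0 < u := Real.sqrt_pos.mpr hA
  unfold rhoF
  rw [← hu]
  have hden : u + φ * b ≠ 0 := by positivity
  field_simp
  linear_combination hu2

lemma scalar_max (α β w δ m r : ℝ) (hα : 0 < α) (hβ : 0 < β) (hw : 0 ≤ w)
    (hδ : 0 < δ) (hr : 0 < r) (hδm : δ ≤ m) (hδr : δ ≤ r)
    (hm : m ≤ α / β) (hrb : r ≤ α / β)
    (hγ : α / r ^ 2 - β / r = w)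
    (sb : ℝ) (hsb : sb ∈ Set.Icc δ m)
    (hmax : ∀ s ∈ Set.Icc δ m,
      -α / s - β * Real.log s - s * w ≤ -α / sb - β * Real.log sb - sb * w) :
    sb = min m r := by
  set e := fun s : ℝ => -α / s - β * Real.log s - s * w with he
  set p := min m r with hp
  have hpδ : δ ≤ p := le_min hδm hδr
  have hpm : p ≤ m := min_le_left _ _
  have hpmem : p ∈ Set.Icc δ m := ⟨hpδ, hpm⟩
  have ederiv : ∀ x : ℝ, 0 < x → HasDerivAt e (α / x ^ 2 - β / x - w) x := by
    intro x hx
    have h1 : HasDerivAt (fun s : ℝ => -α / s) (α / x ^ 2) x := by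
      have h := (hasDerivAt_inv hx.ne').const_mul (-α)
      simpa [div_eq_mul_inv] using h
    have h2 : HasDerivAt (fun s : ℝ => β * Real.log s) (β / x) x := by
      have h := (Real.hasDerivAt_log hx.ne').const_mul β
      simpa [div_eq_mul_inv] using h
    have h3 : HasDerivAt (fun s : ℝ => s * w) w x := by
      simpa using (hasDerivAt_id x).mul_const w
    exact (h1.sub h2).sub h3
  have econt : ContinuousOn e (Set.Icc δ m) := fun x hx =>
    ((ederiv x (lt_of_lt_of_le hδ hx.1)).differentiableAt.continuousAt).continuousWithinAt
  have gkey : ∀ x z : ℝ, 0 < x → x < z → z ≤ α / β → α / z ^ 2 - β / z < α / x ^ 2 - β / x := by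
    intro x z hx hxz hz
    have hz0 : 0 < z := hx.trans hxz
    have h1 : z * β ≤ α := (le_div_iff₀ hβ).mp hz
    have e1 : α / x ^ 2 - β / x - (α / z ^ 2 - β / z)
        = (z - x) * (α * (z + x) - β * x * z) / (x ^ 2 * z ^ 2) := by
      field_simp; ring
    have h3 : 0 < α * (z + x) - β * x * z := by nlinarith
    have h4 : 0 < (z - x) * (α * (z + x) - β * x * z) / (x ^ 2 * z ^ 2) :=
      div_pos (mul_pos (sub_pos.mpr hxz) h3) (by positivity)
    linarith
  have mono : StrictMonoOn e (Set.Icc δ p) := by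
    apply strictMonoOn_of_deriv_pos (convex_Icc _ _)
      (econt.mono (Set.Icc_subset_Icc le_rfl hpm))
    intro x hx
    rw [interior_Icc] at hx
    have hx0 : 0 < x := hδ.trans hx.1
    rw [(ederiv x hx0).deriv]
    have hxr : x < r := lt_of_lt_of_le hx.2 (min_le_right m r)
    have := gkey x r hx0 hxr hrb
    linarith
  have anti : StrictAntiOn e (Set.Icc p m) := by
    apply strictAntiOn_of_deriv_neg (convex_Icc _ _)
      (econt.mono (Set.Icc_subset_Icc hpδ le_rfl))
    intro x hx
    rw [interior_Icc] at hx
    have hx0 : 0 < x := (hδ.trans_le hpδ).trans hx.1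
    rw [(ederiv x hx0).deriv]
    have hpr : p = r := by
      rcases min_cases m r with ⟨h5, _⟩ | ⟨h5, _⟩
      · exfalso; rw [hp] at *; linarith [hx.1.trans hx.2]
      · exact h5
    have hrx : r < x := hpr ▸ hx.1
    have := gkey r x hr hrx (hx.2.le.trans hm)
    linarith
  rcases lt_trichotomy sb p with hlt | heq | hgt
  · exact absurd (hmax p hpmem)
      (not_le.mpr (mono ⟨hsb.1, hlt.le⟩ ⟨hpδ, le_rfl⟩ hlt))
  · exact heq
  · exact absurd (hmax p hpmem)
      (not_le.mpr (anti ⟨le_rfl, hpm⟩ ⟨hgt.le, hsb.2⟩ hgt))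

open Finset in
lemma Q_update {N : ℕ} (G : SimpleGraph (Fin N)) [DecidableRel G.Adj]
    (h : Fin N → ℝ) (i : Fin N) (s : ℝ) :
    (∑ a, ∑ j ∈ G.neighborFinset a,
      Function.update h i s a * Function.update h i s j)
    = (∑ a, ∑ j ∈ G.neighborFinset a, h a * h j)
      + 2 * (s - h i) * (∑ j ∈ G.neighborFinset i, h j) := by
  set u := Function.update h i s with hu
  have point : ∀ a : Fin N, ∀ j ∈ G.neighborFinset a,
      u a * u j = h a * h j + (s - h i) * (if a = i then h j else 0)
        + (s - h i) * (if j = i then h a else 0) := by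
    intro a j hj
    have hadj : G.Adj a j := (SimpleGraph.mem_neighborFinset _ _ _).mp hj
    have hne : a ≠ j := hadj.ne
    by_cases ha : a = i <;> by_cases hb : j = i
    · exact absurd (ha.trans hb.symm) hne
    · rw [if_pos ha, if_neg hb, hu, ha, Function.update_self,
        Function.update_of_ne hb]
      ring
    · rw [if_neg ha, if_pos hb, hu, hb, Function.update_self,
        Function.update_of_ne ha]
      ring
    · rw [if_neg ha, if_neg hb, hu, Function.update_of_ne ha,
        Function.update_of_ne hb]
      ring
  have A : (∑ a, ∑ j ∈ G.neighborFinset a, (if a = i then h j else 0))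
      = ∑ j ∈ G.neighborFinset i, h j := by
    rw [Finset.sum_eq_single i]
    · simp
    · intro a _ ha; simp [ha]
    · intro hi; exact absurd (Finset.mem_univ i) hi
  have B : (∑ a, ∑ j ∈ G.neighborFinset a, (if j = i then h a else 0))
      = ∑ j ∈ G.neighborFinset i, h j := by
    have inner : ∀ a : Fin N, (∑ j ∈ G.neighborFinset a, (if j = i then h a else 0))
        = if a ∈ G.neighborFinset i then h a else 0 := by
      intro a
      rw [Finset.sum_ite_eq' (G.neighborFinset a) i (fun _ => h a)]
      congr 1
      simp [SimpleGraph.mem_neighborFinset, SimpleGraph.adj_comm]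
    simp only [inner]
    rw [Finset.sum_ite_mem, Finset.univ_inter]
  calc (∑ a, ∑ j ∈ G.neighborFinset a, u a * u j)
      = ∑ a, ∑ j ∈ G.neighborFinset a, (h a * h j
          + (s - h i) * (if a = i then h j else 0)
          + (s - h i) * (if j = i then h a else 0)) :=
        Finset.sum_congr rfl fun a _ => Finset.sum_congr rfl fun j hj => point a j hj
    _ = (∑ a, ∑ j ∈ G.neighborFinset a, h a * h j)
        + (s - h i) * (∑ a, ∑ j ∈ G.neighborFinset a, (if a = i then h j else 0))
        + (s - h i) * (∑ a, ∑ j ∈ G.neighborFinset a, (if j = i then h a else 0)) := by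
        simp only [Finset.sum_add_distrib, ← Finset.mul_sum]
    _ = (∑ a, ∑ j ∈ G.neighborFinset a, h a * h j)
        + 2 * (s - h i) * (∑ j ∈ G.neighborFinset i, h j) := by
        rw [A, B]; ring

theorem stmt_11 {N : ℕ} (G : SimpleGraph (Fin N)) [DecidableRel G.Adj]
    (hdeg : ∀ i, 1 ≤ G.degree i)
    (φ ψ b y φn : ℝ) (hφ : 0 < φ) (hψ : 0 < ψ) (hb : 0 < b) (hy : 0 < y)
    (hφn : 0 < φn)
    (hbar : (Fin N → ℝ) → Fin N → ℝ)
    (hhbar : ∀ h i, hbar h i = (1 / (G.degree i : ℝ)) * ∑ j ∈ G.neighborFinset i, h j)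
    (T : (Fin N → ℝ) → Fin N → ℝ)
    (hT : ∀ h i, T h i =
      if hbar h i = 0 then min 1 (ψ * y / (2 * φ))
      else min 1 ((φ * b - Real.sqrt (φ ^ 2 * b ^ 2 +
          2 * φ * ψ * φn * b * y * hbar h i * (G.degree i : ℝ)))
        / (-2 * φ * φn * hbar h i * (G.degree i : ℝ)))) :
    ContinuousOn T (Set.Icc (0 : Fin N → ℝ) 1) ∧
    ∃ h ∈ Set.Icc (0 : Fin N → ℝ) 1, T h = h := by
  have hk : ∀ i, (0:ℝ) < (G.degree i : ℝ) := fun i => by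
    have := hdeg i; positivity
  -- rewrite of T on the unit cube
  have hT' : ∀ h ∈ Set.Icc (0 : Fin N → ℝ) 1, ∀ i, T h i
      = min 1 (rhoF φ ψ b y φn (∑ j ∈ G.neighborFinset i, h j)) := by
    intro h hh i
    have hS0 : 0 ≤ ∑ j ∈ G.neighborFinset i, h j :=
      Finset.sum_nonneg fun j _ => hh.1 j
    have hSk : ∑ j ∈ G.neighborFinset i, h j = hbar h i * (G.degree i : ℝ) := by
      rw [hhbar]
      have hkne := (hk i).ne'
      field_simp
    rw [hT]
    by_cases h0 : hbar h i = 0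
    · rw [if_pos h0, hSk, h0, zero_mul, rhoF_zero φ ψ b y φn hφ hψ hb hy]
    · rw [if_neg h0]
      have hbnn : 0 ≤ hbar h i := by
        rw [hhbar]
        have := hk i
        positivity
      have hbp : 0 < hbar h i := lt_of_le_of_ne hbnn (Ne.symm h0)
      congr 1
      unfold rhoF
      rw [hSk]
      have harg : φ ^ 2 * b ^ 2 + 2 * φ * ψ * φn * b * y * (hbar h i * (G.degree i:ℝ))
          = φ ^ 2 * b ^ 2 + 2 * φ * ψ * φn * b * y * hbar h i * (G.degree i:ℝ) := by ring
      rw [harg]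
      have hApos : (0:ℝ) < φ ^ 2 * b ^ 2 + 2 * φ * ψ * φn * b * y * hbar h i * (G.degree i:ℝ) := by
        have := hk i
        positivity
      set u := Real.sqrt (φ ^ 2 * b ^ 2 + 2 * φ * ψ * φn * b * y * hbar h i * (G.degree i:ℝ)) with hu
      have hu2 : u ^ 2 = φ ^ 2 * b ^ 2 + 2 * φ * ψ * φn * b * y * hbar h i * (G.degree i:ℝ) :=
        Real.sq_sqrt hApos.le
      have hup : 0 < u := Real.sqrt_pos.mpr hApos
      have hden1 : -2 * φ * φn * hbar h i * (G.degree i:ℝ) ≠ 0 := by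
        have hpos : 0 < 2 * φ * φn * hbar h i * (G.degree i:ℝ) := by
          have := hk i
          positivity
        intro hcon
        linarith
      have hden2 : u + φ * b ≠ 0 := by positivity
      rw [div_eq_div_iff hden1 hden2]
      linear_combination (-1:ℝ) * hu2
  constructor
  · have hc : Continuous (fun h : Fin N → ℝ => fun i : Fin N =>
        min 1 (rhoF φ ψ b y φn (∑ j ∈ G.neighborFinset i, h j))) := by
      apply continuous_pi
      intro i
      exact continuous_const.min ((rhoF_cont φ ψ b y φn hφ hb).comp
        (continuous_finset_sum _ fun j _ => continuous_apply j))
    exact hc.continuousOn.congr (fun h hh => funext fun i => hT' h hh i)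
  · by_cases hcase : 1 ≤ rhoF φ ψ b y φn (N:ℝ)
    · refine ⟨1, ⟨zero_le_one, le_refl 1⟩, funext fun i => ?_⟩
      rw [hT' 1 ⟨zero_le_one, le_refl 1⟩ i]
      have hsum : ∑ j ∈ G.neighborFinset i, (1:Fin N → ℝ) j = (G.degree i : ℝ) := by
        simp
      rw [hsum]
      have hdN : (G.degree i : ℝ) ≤ (N:ℝ) := by
        have h1 : G.degree i < N := by
          simpa using G.degree_lt_card_verts i
        exact_mod_cast h1.le
      have h2 : 1 ≤ rhoF φ ψ b y φn (G.degree i : ℝ) :=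
        le_trans hcase (rhoF_anti φ ψ b y φn hφ hψ hb hy hφn (Nat.cast_nonneg _) hdN)
      rw [min_eq_left h2]
      simp
    · push_neg at hcase
      set α := ψ * y * b / (2 * φ * φn) with hα'
      set β := b / φn with hβ'
      have hα : 0 < α := by rw [hα']; positivity
      have hβ : 0 < β := by rw [hβ']; positivity
      have hαβ : α / β = rhoF φ ψ b y φn 0 := by
        rw [hα', hβ', rhoF_zero φ ψ b y φn hφ hψ hb hy]
        field_simp
      set δ := rhoF φ ψ b y φn (N:ℝ) with hδ'
      set m := min 1 (rhoF φ ψ b y φn 0) with hm'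
      have hδpos : 0 < δ := rhoF_pos φ ψ b y φn _ hφ hψ hb hy
      have hδρ0 : δ ≤ rhoF φ ψ b y φn 0 :=
        rhoF_anti φ ψ b y φn hφ hψ hb hy hφn le_rfl (Nat.cast_nonneg _)
      have hδm : δ ≤ m := le_min hcase.le hδρ0
      have hm1 : m ≤ 1 := min_le_left _ _
      have hmρ0 : m ≤ rhoF φ ψ b y φn 0 := min_le_right _ _
      set F : ℝ → ℝ := fun s => -α / s - β * Real.log s with hF
      set Q : (Fin N → ℝ) → ℝ := fun h => ∑ a, ∑ j ∈ G.neighborFinset a, h a * h j with hQ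
      set E : (Fin N → ℝ) → ℝ := fun h => (∑ i, F (h i)) - Q h / 2 with hE
      set K := Set.Icc (fun _ : Fin N => δ) (fun _ : Fin N => m) with hK
      have hKc : IsCompact K := isCompact_Icc
      have hKne : K.Nonempty := ⟨fun _ => δ, ⟨le_refl _, fun i => hδm⟩⟩
      have hEc : ContinuousOn E K := by
        apply ContinuousOn.sub
        · apply continuousOn_finset_sum
          intro i _
          have hFc : ContinuousOn F {s : ℝ | 0 < s} := by
            apply ContinuousOn.sub
            · exact ContinuousOn.div continuousOn_const continuousOn_id
                fun x hx => ne_of_gt hx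
            · exact continuousOn_const.mul (Real.continuousOn_log.mono
                (fun x hx => ne_of_gt hx))
          apply hFc.comp ((continuous_apply i).continuousOn)
          intro x hx
          exact lt_of_lt_of_le hδpos (hx.1 i)
        · exact (((continuous_finset_sum _ fun a _ => continuous_finset_sum _
            fun j _ => (continuous_apply a).mul (continuous_apply j))).continuousOn).div_const 2
      obtain ⟨hstar, hsK, hsmax⟩ := hKc.exists_isMaxOn hKne hEc
      have hsIcc01 : hstar ∈ Set.Icc (0:Fin N → ℝ) 1 :=
        ⟨fun i => le_trans hδpos.le (hsK.1 i), fun i => le_trans (hsK.2 i) hm1⟩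
      refine ⟨hstar, hsIcc01, funext fun i => ?_⟩
      set w := ∑ j ∈ G.neighborFinset i, hstar j with hw
      have hw0 : 0 ≤ w := Finset.sum_nonneg fun j _ => le_trans hδpos.le (hsK.1 j)
      have hwN : w ≤ (N:ℝ) := by
        have h1 : w ≤ ∑ j ∈ G.neighborFinset i, (1:ℝ) :=
          Finset.sum_le_sum fun j _ => le_trans (hsK.2 j) hm1
        have h2 : ∑ j ∈ G.neighborFinset i, (1:ℝ) = (G.degree i : ℝ) := by simp
        have h3 : G.degree i < N := by simpa using G.degree_lt_card_verts i
        have h4 : (G.degree i : ℝ) ≤ (N:ℝ) := by exact_mod_cast h3.le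
        linarith
      have hδρw : δ ≤ rhoF φ ψ b y φn w :=
        rhoF_anti φ ψ b y φn hφ hψ hb hy hφn hw0 hwN
      have hρwρ0 : rhoF φ ψ b y φn w ≤ rhoF φ ψ b y φn 0 :=
        rhoF_anti φ ψ b y φn hφ hψ hb hy hφn le_rfl hw0
      have hγ : α / (rhoF φ ψ b y φn w)^2 - β / (rhoF φ ψ b y φn w) = w := by
        rw [hα', hβ']
        exact gamma_rhoF φ ψ b y φn w hφ hψ hb hy hφn hw0
      have hcoord : ∀ s ∈ Set.Icc δ m,
          -α / s - β * Real.log s - s * w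
          ≤ -α / (hstar i) - β * Real.log (hstar i) - (hstar i) * w := by
        intro s hsm
        have hup : Function.update hstar i s ∈ K := by
          constructor <;> intro j <;> rw [Function.update_apply] <;> split
          · exact hsm.1
          · exact hsK.1 j
          · exact hsm.2
          · exact hsK.2 j
        have h1 := hsmax hup
        have hQu : Q (Function.update hstar i s) = Q hstar + 2*(s - hstar i)*w :=
          Q_update G hstar i s
        have hFu : (∑ j, F (Function.update hstar i s j))
            = (∑ j, F (hstar j)) - F (hstar i) + F s := by
          have heq : ∀ j, F (Function.update hstar i s j)
              = Function.update (fun j => F (hstar j)) i (F s) j := by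
            intro j
            rw [Function.update_apply, Function.update_apply]
            split <;> rfl
          rw [Finset.sum_congr rfl fun j _ => heq j,
            Finset.sum_update_of_mem (Finset.mem_univ i),
            Finset.sum_eq_sum_sdiff_singleton_add (Finset.mem_univ i) (fun j => F (hstar j))]
          ring
        have hEi : E (Function.update hstar i s)
            = E hstar + ((F s - s*w) - (F (hstar i) - (hstar i)*w)) := by
          rw [hE]
          simp only
          rw [hQu, hFu]
          ring
        have h2 : E (Function.update hstar i s) ≤ E hstar := h1
        rw [hEi] at h2
        have hΔ : F s - s*w ≤ F (hstar i) - hstar i * w := by linarith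
        exact hΔ
      have hfinal := scalar_max α β w δ m (rhoF φ ψ b y φn w) hα hβ hw0 hδpos
        (rhoF_pos φ ψ b y φn _ hφ hψ hb hy) hδm hδρw
        (by rw [hαβ]; exact hmρ0) (by rw [hαβ]; exact hρwρ0) hγ
        (hstar i) ⟨hsK.1 i, hsK.2 i⟩ hcoord
      rw [hT' hstar hsIcc01 i, ← hw, hfinal, hm', min_assoc, min_eq_right hρwρ0]
end
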